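/- arXiv:2511.12132 — 2 statements merged into one kernel-verified Lean document; each statement's English description precedes it below -/
import Mathlib

section
/- Fix two distinct nodes i ≠ j in V and let A(t) denote the matrix obtained from A by replacing the entries at positions (i,j) and (j,i) by t ≥ 0 (all other entries unchanged). Suppose t₀ > 0 and that at t = t₀ both group volumes are positive: vol(V₀) > 0 and vol(V₁) > 0 (hence vol(G) > 0). Then the function t ↦ H^{P_S}(A(t)) is differentiable at t₀. -/
open Finset

/-- Degree of a node: sum of edge weights in its row. -/
noncomputable def deg {V : Type*} [Fintype V] (A : V → V → ℝ) (v : V) : ℝ := ∑ u, A v u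

/-- Volume of a set of nodes: sum of their degrees. -/
noncomputable def vol {V : Type*} [Fintype V] (A : V → V → ℝ) (W : Finset V) : ℝ :=
  ∑ v ∈ W, deg A v

/-- Volume of the whole graph. -/
noncomputable def volG {V : Type*} [Fintype V] (A : V → V → ℝ) : ℝ := vol A Finset.univ

/-- Cut weight of a group: total weight of edges with exactly one endpoint inside. -/
noncomputable def cutw {V : Type*} [Fintype V] [DecidableEq V] (A : V → V → ℝ)
    (W : Finset V) : ℝ :=
  ∑ v ∈ W, ∑ u ∈ Wᶜ, A v u

/-- Intra-group (signed) entropy contribution of a group. -/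
noncomputable def intraPart {V : Type*} [Fintype V] (A : V → V → ℝ) (W : Finset V) : ℝ :=
  (vol A W / volG A) * ∑ v ∈ W, (deg A v / vol A W) * Real.logb 2 (deg A v / vol A W)

/-- Two-dimensional structural entropy w.r.t. the sensitive partition `{V0, V1}`. -/
noncomputable def H2SE {V : Type*} [Fintype V] [DecidableEq V] (A : V → V → ℝ)
    (V0 V1 : Finset V) : ℝ :=
  -(intraPart A V0 + intraPart A V1)
    - ((cutw A V0 / volG A) * Real.logb 2 (vol A V0 / volG A)
       + (cutw A V1 / volG A) * Real.logb 2 (vol A V1 / volG A))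

/-- The matrix obtained from `A` by replacing the entries at `(i,j)` and `(j,i)` by `t`. -/
noncomputable def updEdge {V : Type*} [DecidableEq V] (A : V → V → ℝ) (i j : V) (t : ℝ) :
    V → V → ℝ :=
  fun u v => if (u = i ∧ v = j) ∨ (u = j ∧ v = i) then t else A u v

set_option linter.unusedSectionVars false
set_option linter.unusedVariables false

section Aux

variable {V : Type*} [Fintype V] [DecidableEq V] (A : V → V → ℝ) (i j : V)

lemma diff_entry (u v : V) (t₀ : ℝ) :
    DifferentiableAt ℝ (fun t => updEdge A i j t u v) t₀ := by
  unfold updEdge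
  by_cases h : (u = i ∧ v = j) ∨ (u = j ∧ v = i) <;> simp only [h, if_true, if_false]
  · exact differentiableAt_fun_id
  · exact differentiableAt_const _

lemma diff_deg (v : V) (t₀ : ℝ) :
    DifferentiableAt ℝ (fun t => deg (updEdge A i j t) v) t₀ := by
  unfold deg
  exact DifferentiableAt.fun_sum fun u _ => diff_entry A i j v u t₀

lemma diff_vol (W : Finset V) (t₀ : ℝ) :
    DifferentiableAt ℝ (fun t => vol (updEdge A i j t) W) t₀ := by
  unfold vol
  exact DifferentiableAt.fun_sum fun v _ => diff_deg A i j v t₀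

lemma diff_volG (t₀ : ℝ) :
    DifferentiableAt ℝ (fun t => volG (updEdge A i j t)) t₀ := diff_vol A i j _ t₀

lemma diff_cutw (W : Finset V) (t₀ : ℝ) :
    DifferentiableAt ℝ (fun t => cutw (updEdge A i j t) W) t₀ := by
  unfold cutw
  exact DifferentiableAt.fun_sum fun v _ =>
    DifferentiableAt.fun_sum fun u _ => diff_entry A i j v u t₀

lemma deg_const_upd {v : V} (hvi : v ≠ i) (hvj : v ≠ j) (t : ℝ) :
    deg (updEdge A i j t) v = deg A v := by
  unfold deg updEdge
  exact Finset.sum_congr rfl fun u _ => by simp [hvi, hvj]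

lemma deg_ge_upd (hnn : ∀ u v, 0 ≤ A u v) (hij : i ≠ j) {t : ℝ} (ht : 0 ≤ t)
    {v : V} (hv : v = i ∨ v = j) : t ≤ deg (updEdge A i j t) v := by
  have hnn' : ∀ u, 0 ≤ updEdge A i j t v u := by
    intro u; unfold updEdge; split
    · exact ht
    · exact hnn _ _
  rcases hv with h | h
  · have hle := Finset.single_le_sum (f := fun u => updEdge A i j t v u)
      (fun u _ => hnn' u) (Finset.mem_univ j)
    have he : updEdge A i j t v j = t := by simp [updEdge, h]
    have hle' : updEdge A i j t v j ≤ ∑ u, updEdge A i j t v u := by simpa using hle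
    unfold deg
    linarith
  · have hle := Finset.single_le_sum (f := fun u => updEdge A i j t v u)
      (fun u _ => hnn' u) (Finset.mem_univ i)
    have he : updEdge A i j t v i = t := by simp [updEdge, h]
    have hle' : updEdge A i j t v i ≤ ∑ u, updEdge A i j t v u := by simpa using hle
    unfold deg
    linarith

lemma diff_intra (hnn : ∀ u v, 0 ≤ A u v) (hij : i ≠ j) {t₀ : ℝ} (ht₀ : 0 < t₀)
    (W : Finset V) (hW : 0 < vol (updEdge A i j t₀) W)
    (hG : 0 < volG (updEdge A i j t₀)) :
    DifferentiableAt ℝ (fun t => intraPart (updEdge A i j t) W) t₀ := by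
  have hWne : vol (updEdge A i j t₀) W ≠ 0 := ne_of_gt hW
  have hGne : volG (updEdge A i j t₀) ≠ 0 := ne_of_gt hG
  unfold intraPart
  refine DifferentiableAt.mul ((diff_vol A i j W t₀).div (diff_volG A i j t₀) hGne) ?_
  refine DifferentiableAt.fun_sum fun v _ => ?_
  by_cases hd : deg (updEdge A i j t₀) v = 0
  · -- then v ∉ {i, j}, and the degree is constantly 0
    have hvi : v ≠ i := by
      intro h
      have := deg_ge_upd A i j hnn hij ht₀.le (Or.inl h)
      linarith
    have hvj : v ≠ j := by
      intro h
      have := deg_ge_upd A i j hnn hij ht₀.le (Or.inr h)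
      linarith
    have hA0 : deg A v = 0 := by
      rw [← deg_const_upd A i j hvi hvj t₀]; exact hd
    have : (fun t => (deg (updEdge A i j t) v / vol (updEdge A i j t) W) *
        Real.logb 2 (deg (updEdge A i j t) v / vol (updEdge A i j t) W))
        = fun _ => (0 : ℝ) := by
      funext t
      rw [deg_const_upd A i j hvi hvj t, hA0]
      simp
    rw [this]
    exact differentiableAt_const _
  · have hratio : DifferentiableAt ℝ
        (fun t => deg (updEdge A i j t) v / vol (updEdge A i j t) W) t₀ :=
      (diff_deg A i j v t₀).div (diff_vol A i j W t₀) hWne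
    have hrne : deg (updEdge A i j t₀) v / vol (updEdge A i j t₀) W ≠ 0 :=
      div_ne_zero hd hWne
    refine hratio.mul ?_
    simp only [Real.logb]
    exact (hratio.log hrne).div_const _

end Aux

/-- the map `t ↦ H^{P_S}(A(t))` is differentiable at `t₀`. -/
theorem stmt0 {V : Type*} [Fintype V] [DecidableEq V] (A : V → V → ℝ)
    (hsym : ∀ u v, A u v = A v u) (hnn : ∀ u v, 0 ≤ A u v)
    (V0 V1 : Finset V) (hpart : V1 = V0ᶜ)
    (i j : V) (hij : i ≠ j) (t₀ : ℝ) (ht₀ : 0 < t₀)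
    (hv0 : 0 < vol (updEdge A i j t₀) V0) (hv1 : 0 < vol (updEdge A i j t₀) V1) :
    DifferentiableAt ℝ (fun t => H2SE (updEdge A i j t) V0 V1) t₀ := by
  have hG : 0 < volG (updEdge A i j t₀) := by
    have hsplit : volG (updEdge A i j t₀)
        = vol (updEdge A i j t₀) V0 + vol (updEdge A i j t₀) V1 := by
      rw [hpart]
      exact (Finset.sum_add_sum_compl V0 _).symm
    rw [hsplit]; linarith
  have hGne : volG (updEdge A i j t₀) ≠ 0 := ne_of_gt hG
  have hcut : ∀ (W : Finset V), 0 < vol (updEdge A i j t₀) W →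
      DifferentiableAt ℝ (fun t => (cutw (updEdge A i j t) W / volG (updEdge A i j t)) *
        Real.logb 2 (vol (updEdge A i j t) W / volG (updEdge A i j t))) t₀ := by
    intro W hW
    refine DifferentiableAt.mul ((diff_cutw A i j W t₀).div (diff_volG A i j t₀) hGne) ?_
    have hratio : DifferentiableAt ℝ
        (fun t => vol (updEdge A i j t) W / volG (updEdge A i j t)) t₀ :=
      (diff_vol A i j W t₀).div (diff_volG A i j t₀) hGne
    have hrne : vol (updEdge A i j t₀) W / volG (updEdge A i j t₀) ≠ 0 :=
      div_ne_zero (ne_of_gt hW) hGne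
    simp only [Real.logb]
    exact (hratio.log hrne).div_const _
  unfold H2SE
  exact DifferentiableAt.sub
    (DifferentiableAt.neg
      ((diff_intra A i j hnn hij ht₀ V0 hv0 hG).add
        (diff_intra A i j hnn hij ht₀ V1 hv1 hG)))
    ((hcut V0 hv0).add (hcut V1 hv1))
end

section
/- Let (Ω, P) be a finite probability space, let S : Ω → {0,1} satisfy P(S=0) = P(S=1) = 1/2, let X : Ω → α with α finite, and let c : α → {0,1} be any classifier. Then |P(c(X) = 1 | S = 0) − P(c(X) = 1 | S = 1)| ≤ √(2 · I(X ; S)). -/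
open Finset

open Classical in
/-- Probability of an event on a finite probability space given by a weight function `P`. -/
noncomputable def pr {Ω : Type*} [Fintype Ω] (P : Ω → ℝ) (E : Ω → Prop) : ℝ :=
  ∑ ω, if E ω then P ω else 0

/-- Shannon entropy (natural logarithm, with the convention `0 · ln 0 = 0`). -/
noncomputable def shEnt {Ω α : Type*} [Fintype Ω] [Fintype α] (P : Ω → ℝ) (X : Ω → α) : ℝ :=
  -∑ x, pr P (fun ω => X ω = x) * Real.log (pr P (fun ω => X ω = x))

/-- Mutual information `I(X;S) = H(X) + H(S) − H((X,S))`. -/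
noncomputable def mi {Ω α β : Type*} [Fintype Ω] [Fintype α] [Fintype β]
    (P : Ω → ℝ) (X : Ω → α) (S : Ω → β) : ℝ :=
  shEnt P X + shEnt P S - shEnt P (fun ω => (X ω, S ω))

/- ### Auxiliary analytic lemmas -/

lemma stmt6_E1 : ∀ t ∈ Set.Ico (0:ℝ) 1, 0 ≤ Real.log (1+t) - Real.log (1-t) - 2*t := by
  have hconv : Convex ℝ (Set.Ico (0:ℝ) 1) := convex_Ico 0 1
  set g : ℝ → ℝ := fun t => Real.log (1+t) - Real.log (1-t) - 2*t with hg
  have hd : ∀ x ∈ Set.Ioo (0:ℝ) 1, HasDerivAt g (1/(1+x) + 1/(1-x) - 2) x := by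
    intro x hx
    have h1 : (1:ℝ)+x ≠ 0 := by nlinarith [hx.1, hx.2]
    have h2 : (1:ℝ)-x ≠ 0 := by nlinarith [hx.1, hx.2]
    have d1 : HasDerivAt (fun t : ℝ => Real.log (1+t)) (1/(1+x)) x := by
      have := (Real.hasDerivAt_log h1).comp x ((hasDerivAt_const x (1:ℝ)).add (hasDerivAt_id x))
      simpa [Function.comp_def] using this
    have d2 : HasDerivAt (fun t : ℝ => Real.log (1-t)) (-(1/(1-x))) x := by
      have h := (Real.hasDerivAt_log h2).comp x ((hasDerivAt_const x (1:ℝ)).sub (hasDerivAt_id x))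
      simp [Function.comp_def] at h
      rw [one_div]
      exact h
    have d3 : HasDerivAt (fun t : ℝ => 2*t) 2 x := by
      simpa using (hasDerivAt_id x).const_mul (2:ℝ)
    simpa [hg, Pi.sub_def] using (d1.sub d2).sub d3 |>.congr_deriv (by ring)
  have hcont : ContinuousOn g (Set.Ico 0 1) := by
    apply ContinuousOn.sub
    apply ContinuousOn.sub
    · exact ContinuousOn.log (by fun_prop) (fun x hx => by nlinarith [hx.1, hx.2])
    · exact ContinuousOn.log (by fun_prop) (fun x hx => by nlinarith [hx.1, hx.2])
    · fun_prop
  have hmono : MonotoneOn g (Set.Ico 0 1) := by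
    apply monotoneOn_of_deriv_nonneg hconv hcont
    · rw [interior_Ico]
      exact fun x hx => (hd x hx).differentiableAt.differentiableWithinAt
    · rw [interior_Ico]
      intro x hx
      rw [(hd x hx).deriv]
      have h1 : (0:ℝ) < 1+x := by nlinarith [hx.1, hx.2]
      have h2 : (0:ℝ) < 1-x := by nlinarith [hx.1, hx.2]
      have : 1/(1+x) + 1/(1-x) - 2 = 2*x^2/((1+x)*(1-x)) := by field_simp; ring
      rw [this]; positivity
  intro t ht
  have h0 : (0:ℝ) ∈ Set.Ico (0:ℝ) 1 := by constructor <;> norm_num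
  have := hmono h0 ht ht.1
  simpa [hg] using this

lemma stmt6_E2 : ∀ t ∈ Set.Ico (0:ℝ) 1,
    t^2 ≤ (1+t)*Real.log (1+t) + (1-t)*Real.log (1-t) := by
  have hconv : Convex ℝ (Set.Ico (0:ℝ) 1) := convex_Ico 0 1
  set g : ℝ → ℝ := fun t => (1+t)*Real.log (1+t) + (1-t)*Real.log (1-t) - t^2 with hg
  have hd : ∀ x ∈ Set.Ioo (0:ℝ) 1,
      HasDerivAt g (Real.log (1+x) - Real.log (1-x) - 2*x) x := by
    intro x hx
    have h1 : (1:ℝ)+x ≠ 0 := by nlinarith [hx.1, hx.2]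
    have h2 : (1:ℝ)-x ≠ 0 := by nlinarith [hx.1, hx.2]
    have d1 : HasDerivAt (fun t : ℝ => Real.log (1+t)) (1/(1+x)) x := by
      have := (Real.hasDerivAt_log h1).comp x ((hasDerivAt_const x (1:ℝ)).add (hasDerivAt_id x))
      simpa [Function.comp_def] using this
    have d2 : HasDerivAt (fun t : ℝ => Real.log (1-t)) (-(1/(1-x))) x := by
      have h := (Real.hasDerivAt_log h2).comp x ((hasDerivAt_const x (1:ℝ)).sub (hasDerivAt_id x))
      simp [Function.comp_def] at h
      rw [one_div]
      exact h
    have e1 : HasDerivAt (fun t : ℝ => (1+t)) 1 x := by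
      simpa [Pi.add_def] using (hasDerivAt_const x (1:ℝ)).add (hasDerivAt_id x)
    have e2 : HasDerivAt (fun t : ℝ => (1-t)) (-1) x := by
      simpa [Pi.sub_def] using (hasDerivAt_const x (1:ℝ)).sub (hasDerivAt_id x)
    have m1 := e1.mul d1
    have m2 := e2.mul d2
    have d3 : HasDerivAt (fun t : ℝ => t^2) (2*x) x := by
      simpa using (hasDerivAt_pow 2 x)
    have := (m1.add m2).sub d3
    apply this.congr_deriv
    field_simp
    ring
  have hcont : ContinuousOn g (Set.Ico 0 1) := by
    apply ContinuousOn.sub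
    apply ContinuousOn.add
    · exact (by fun_prop : ContinuousOn (fun t:ℝ => 1+t) _).mul
        (ContinuousOn.log (by fun_prop) (fun x hx => by nlinarith [hx.1, hx.2]))
    · exact (by fun_prop : ContinuousOn (fun t:ℝ => 1-t) _).mul
        (ContinuousOn.log (by fun_prop) (fun x hx => by nlinarith [hx.1, hx.2]))
    · fun_prop
  have hmono : MonotoneOn g (Set.Ico 0 1) := by
    apply monotoneOn_of_deriv_nonneg hconv hcont
    · rw [interior_Ico]
      exact fun x hx => (hd x hx).differentiableAt.differentiableWithinAt
    · rw [interior_Ico]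
      intro x hx
      rw [(hd x hx).deriv]
      exact stmt6_E1 x ⟨le_of_lt hx.1, hx.2⟩
  intro t ht
  have h0 : (0:ℝ) ∈ Set.Ico (0:ℝ) 1 := by constructor <;> norm_num
  have := hmono h0 ht ht.1
  simp only [hg] at this
  simp only [add_zero, sub_zero, Real.log_one] at this
  nlinarith [this]

lemma stmt6_keyAux (p q : ℝ) (hq : 0 ≤ q) (hpq : q ≤ p) :
    (p-q)^2/(2*(p+q)) ≤ p * Real.log p + q * Real.log q
      - (p+q)*Real.log (p+q) + (p+q)*Real.log 2 := by
  rcases eq_or_lt_of_le hq with h0 | hqpos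
  · rcases eq_or_lt_of_le (h0 ▸ hpq : (0:ℝ) ≤ p) with hp0 | hppos
    · simp [← h0, ← hp0]
    · have : (p-q)^2/(2*(p+q)) = p/2 := by rw [← h0]; field_simp; ring
      rw [this, ← h0]
      simp only [add_zero, zero_mul]
      nlinarith [Real.log_two_gt_d9]
  · have hppos : 0 < p := lt_of_lt_of_le hqpos hpq
    have hs : 0 < p + q := by linarith
    set t : ℝ := (p - q)/(p + q) with htdef
    have ht : t ∈ Set.Ico (0:ℝ) 1 := by
      constructor
      · apply div_nonneg (by linarith) hs.le
      · rw [div_lt_one hs]; linarith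
    have h1t : 1 + t = 2*p/(p+q) := by rw [htdef]; field_simp; ring
    have h2t : 1 - t = 2*q/(p+q) := by rw [htdef]; field_simp; ring
    have hlog1 : Real.log (1+t) = Real.log 2 + Real.log p - Real.log (p+q) := by
      rw [h1t, Real.log_div (by positivity) hs.ne', Real.log_mul (by norm_num) hppos.ne']
    have hlog2 : Real.log (1-t) = Real.log 2 + Real.log q - Real.log (p+q) := by
      rw [h2t, Real.log_div (by positivity) hs.ne', Real.log_mul (by norm_num) hqpos.ne']
    have hE := stmt6_E2 t ht
    have hmul := mul_le_mul_of_nonneg_left hE (by positivity : (0:ℝ) ≤ (p+q)/2)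
    have lhs_eq : (p+q)/2 * t^2 = (p-q)^2/(2*(p+q)) := by
      rw [htdef]; field_simp
    have rhs_eq : (p+q)/2 * ((1+t)*Real.log (1+t) + (1-t)*Real.log (1-t))
        = p * Real.log p + q * Real.log q - (p+q)*Real.log (p+q) + (p+q)*Real.log 2 := by
      rw [hlog1, hlog2, h1t, h2t]
      field_simp
      ring
    rw [lhs_eq, rhs_eq] at hmul
    exact hmul

lemma stmt6_key (p q : ℝ) (hp : 0 ≤ p) (hq : 0 ≤ q) :
    (p-q)^2/(2*(p+q)) ≤ p * Real.log p + q * Real.log q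
      - (p+q)*Real.log (p+q) + (p+q)*Real.log 2 := by
  rcases le_total q p with h | h
  · exact stmt6_keyAux p q hq h
  · have := stmt6_keyAux q p hp h
    have h2 : (p-q)^2 = (q-p)^2 := by ring
    rw [add_comm p q, h2]
    linarith

/- ### Auxiliary probability lemmas -/

lemma pr_congr {Ω : Type*} [Fintype Ω] (P : Ω → ℝ) {E F : Ω → Prop}
    (h : ∀ ω, E ω ↔ F ω) : pr P E = pr P F := by
  simp only [pr]
  refine Finset.sum_congr rfl (fun ω _ => ?_)
  by_cases hE : E ω
  · simp [hE, (h ω).mp hE]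
  · rw [if_neg hE, if_neg (fun hF => hE ((h ω).mpr hF))]

lemma pr_nonneg {Ω : Type*} [Fintype Ω] {P : Ω → ℝ} (hP : ∀ ω, 0 ≤ P ω)
    (E : Ω → Prop) : 0 ≤ pr P E := by
  simp only [pr]
  exact Finset.sum_nonneg (fun ω _ => by split_ifs; exacts [hP ω, le_refl 0])

open Classical in
lemma pr_fiber {Ω α : Type*} [Fintype Ω] [Fintype α] (P : Ω → ℝ) (X : Ω → α)
    (Q : α → Prop) (R : Ω → Prop) :
    pr P (fun ω => Q (X ω) ∧ R ω) = ∑ x, if Q x then pr P (fun ω => X ω = x ∧ R ω) else 0 := by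
  have step : ∀ x : α, (if Q x then pr P (fun ω => X ω = x ∧ R ω) else 0)
      = pr P (fun ω => Q x ∧ X ω = x ∧ R ω) := by
    intro x
    by_cases h : Q x
    · rw [if_pos h]
      exact pr_congr P (fun ω => by tauto)
    · rw [if_neg h]
      simp [pr, h]
  rw [Finset.sum_congr rfl (fun x _ => step x)]
  simp only [pr]
  beta_reduce
  rw [Finset.sum_comm]
  refine Finset.sum_congr rfl (fun ω _ => ?_)
  by_cases hQ : Q (X ω) <;> by_cases hR : R ω <;>
    simp only [hQ, hR, and_true, and_false, if_true, if_false, true_and, false_and,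
      Finset.sum_const_zero, if_neg (fun h : False => h), ite_false]
  · symm
    rw [Finset.sum_eq_single (X ω) (fun b _ hb => if_neg (fun h => hb h.2.symm))
        (fun h => absurd (Finset.mem_univ _) h)]
    simp [hQ]
  · symm
    apply Finset.sum_eq_zero
    intro x _
    exact if_neg (fun h => hQ (by rw [h.2]; exact h.1))

lemma pr_partition {Ω α : Type*} [Fintype Ω] [Fintype α] (P : Ω → ℝ) (X : Ω → α)
    (R : Ω → Prop) : pr P R = ∑ x, pr P (fun ω => X ω = x ∧ R ω) := by
  classical
  have h := pr_fiber P X (fun _ => True) R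
  simp only [if_true] at h
  rw [← h]
  exact pr_congr P (fun ω => by tauto)

lemma pr_split {Ω : Type*} [Fintype Ω] (P : Ω → ℝ) (S : Ω → Fin 2) (E : Ω → Prop) :
    pr P E = pr P (fun ω => E ω ∧ S ω = 0) + pr P (fun ω => E ω ∧ S ω = 1) := by
  classical
  simp only [pr, ← Finset.sum_add_distrib]
  refine Finset.sum_congr rfl (fun ω _ => ?_)
  have h : S ω = 0 ∨ S ω = 1 := by omega
  by_cases hE : E ω
  · rcases h with h | h <;> simp [hE, h]
  · simp [hE]

/-- for a balanced binary `S`, the demographic disparity of any classifier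
`c` applied to `X` is bounded by `√(2·I(X;S))`. -/
theorem stmt6 {Ω α : Type*} [Fintype Ω] [Fintype α]
    (P : Ω → ℝ) (hP0 : ∀ ω, 0 ≤ P ω) (hP1 : ∑ ω, P ω = 1)
    (S : Ω → Fin 2) (X : Ω → α)
    (hS0 : pr P (fun ω => S ω = 0) = 1 / 2) (hS1 : pr P (fun ω => S ω = 1) = 1 / 2)
    (c : α → Fin 2) :
    |pr P (fun ω => c (X ω) = 1 ∧ S ω = 0) / pr P (fun ω => S ω = 0)
        - pr P (fun ω => c (X ω) = 1 ∧ S ω = 1) / pr P (fun ω => S ω = 1)| ≤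
      Real.sqrt (2 * mi P X S) := by
  classical
  set p : α → ℝ := fun x => pr P (fun ω => X ω = x ∧ S ω = 0) with hpdef
  set q : α → ℝ := fun x => pr P (fun ω => X ω = x ∧ S ω = 1) with hqdef
  have hp0 : ∀ x, 0 ≤ p x := fun x => pr_nonneg hP0 _
  have hq0 : ∀ x, 0 ≤ q x := fun x => pr_nonneg hP0 _
  have hX : ∀ x, pr P (fun ω => X ω = x) = p x + q x := fun x => pr_split P S _
  have hsum_p : ∑ x, p x = 1/2 := by
    have h := pr_partition P X (fun ω => S ω = 0)
    rw [hS0] at h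
    exact h.symm
  have hsum_q : ∑ x, q x = 1/2 := by
    have h := pr_partition P X (fun ω => S ω = 1)
    rw [hS1] at h
    exact h.symm
  have htot : ∑ x, (p x + q x) = 1 := by
    rw [Finset.sum_add_distrib, hsum_p, hsum_q]; norm_num
  -- entropy computations
  have hHS : shEnt P S = Real.log 2 := by
    simp only [shEnt]
    rw [Fin.sum_univ_two, hS0, hS1, show ((1:ℝ)/2) = 2⁻¹ by norm_num, Real.log_inv]
    ring
  have hHX : shEnt P X = -∑ x, (p x + q x) * Real.log (p x + q x) := by
    simp only [shEnt]
    congr 1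
    exact Finset.sum_congr rfl (fun x _ => by rw [hX x])
  have hpair0 : ∀ x, pr P (fun ω => (X ω, S ω) = (x, 0)) = p x := fun x =>
    pr_congr P (fun ω => by simp [Prod.ext_iff])
  have hpair1 : ∀ x, pr P (fun ω => (X ω, S ω) = (x, 1)) = q x := fun x =>
    pr_congr P (fun ω => by simp [Prod.ext_iff])
  have hHXS : shEnt P (fun ω => (X ω, S ω))
      = -∑ x, (p x * Real.log (p x) + q x * Real.log (q x)) := by
    simp only [shEnt]
    rw [Fintype.sum_prod_type]
    congr 1
    refine Finset.sum_congr rfl (fun x _ => ?_)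
    rw [Fin.sum_univ_two, hpair0 x, hpair1 x]
  have hmi : mi P X S = ∑ x, (p x * Real.log (p x) + q x * Real.log (q x)
      - (p x + q x) * Real.log (p x + q x) + (p x + q x) * Real.log 2) := by
    have hdist : ∑ x, (p x * Real.log (p x) + q x * Real.log (q x)
        - (p x + q x) * Real.log (p x + q x) + (p x + q x) * Real.log 2)
        = (∑ x, (p x * Real.log (p x) + q x * Real.log (q x))
            - ∑ x, (p x + q x) * Real.log (p x + q x))
          + (∑ x, (p x + q x)) * Real.log 2 := by
      rw [Finset.sum_add_distrib, Finset.sum_sub_distrib, Finset.sum_mul]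
    rw [mi, hHX, hHS, hHXS, hdist, htot]
    ring
  -- the chain of inequalities
  have hbound : ∑ x, (p x - q x)^2 / (p x + q x) ≤ 2 * mi P X S := by
    rw [hmi, Finset.mul_sum]
    apply Finset.sum_le_sum
    intro x _
    have h := stmt6_key (p x) (q x) (hp0 x) (hq0 x)
    have e : (p x - q x)^2/(p x + q x) = 2 * ((p x - q x)^2/(2*(p x + q x))) := by
      rw [← mul_div_mul_left ((p x - q x)^2) (p x + q x) (two_ne_zero), mul_div_assoc]
    rw [e]
    linarith
  have hsq : (∑ x, |p x - q x|)^2 ≤ ∑ x, (p x - q x)^2/(p x + q x) := by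
    have hfg : ∀ x : α, |p x - q x|
        = Real.sqrt ((p x - q x)^2/(p x + q x)) * Real.sqrt (p x + q x) := by
      intro x
      rcases eq_or_lt_of_le (add_nonneg (hp0 x) (hq0 x)) with h | h
      · have hp : p x = 0 := by linarith [hp0 x, hq0 x]
        have hq : q x = 0 := by linarith [hp0 x, hq0 x]
        simp [hp, hq]
      · rw [← Real.sqrt_mul (by positivity), div_mul_cancel₀ _ (ne_of_gt h),
          Real.sqrt_sq_eq_abs]
    have h1 : ∑ x, |p x - q x|
        = ∑ x, Real.sqrt ((p x - q x)^2/(p x + q x)) * Real.sqrt (p x + q x) :=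
      Finset.sum_congr rfl (fun x _ => hfg x)
    calc (∑ x, |p x - q x|)^2
        = (∑ x, Real.sqrt ((p x - q x)^2/(p x + q x)) * Real.sqrt (p x + q x))^2 := by
          rw [h1]
      _ ≤ (∑ x, (Real.sqrt ((p x - q x)^2/(p x + q x)))^2)
            * (∑ x, (Real.sqrt (p x + q x))^2) :=
          Finset.sum_mul_sq_le_sq_mul_sq univ _ _
      _ = (∑ x, (p x - q x)^2/(p x + q x)) * 1 := by
          congr 1
          · exact Finset.sum_congr rfl (fun x _ =>
              Real.sq_sqrt (div_nonneg (sq_nonneg _) (add_nonneg (hp0 x) (hq0 x))))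
          · rw [← htot]
            exact Finset.sum_congr rfl
              (fun x _ => Real.sq_sqrt (add_nonneg (hp0 x) (hq0 x)))
      _ = _ := mul_one _
  have hD0 : 0 ≤ ∑ x, |p x - q x| := Finset.sum_nonneg (fun x _ => abs_nonneg _)
  have h2mi : 0 ≤ 2 * mi P X S := by
    refine le_trans (Finset.sum_nonneg (fun x _ => ?_)) hbound
    exact div_nonneg (sq_nonneg _) (add_nonneg (hp0 x) (hq0 x))
  have hDle : ∑ x, |p x - q x| ≤ Real.sqrt (2 * mi P X S) :=
    (Real.le_sqrt hD0 h2mi).mpr (le_trans hsq hbound)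
  -- the disparity
  have ha := pr_fiber P X (fun a => c a = 1) (fun ω => S ω = 0)
  have hb := pr_fiber P X (fun a => c a = 1) (fun ω => S ω = 1)
  have hdiff : pr P (fun ω => c (X ω) = 1 ∧ S ω = 0) - pr P (fun ω => c (X ω) = 1 ∧ S ω = 1)
      = ∑ x, (if c x = 1 then p x - q x else 0) := by
    rw [ha, hb, ← Finset.sum_sub_distrib]
    exact Finset.sum_congr rfl (fun x _ => by split_ifs <;> ring)
  have hzero : ∑ x, (p x - q x) = 0 := by
    rw [Finset.sum_sub_distrib, hsum_p, hsum_q]; ring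
  have hcompl : ∑ x, (if c x = 1 then p x - q x else 0)
      + ∑ x, (if c x = 1 then (0:ℝ) else p x - q x) = 0 := by
    rw [← Finset.sum_add_distrib]
    have e : ∑ x, ((if c x = 1 then p x - q x else 0) + (if c x = 1 then (0:ℝ) else p x - q x))
        = ∑ x, (p x - q x) :=
      Finset.sum_congr rfl (fun x _ => by split_ifs <;> ring)
    rw [e, hzero]
  have habs : 2 * |∑ x, (if c x = 1 then p x - q x else 0)| ≤ ∑ x, |p x - q x| := by
    have huv : ∑ x, (if c x = 1 then (0:ℝ) else p x - q x)
        = -∑ x, (if c x = 1 then p x - q x else 0) := by linarith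
    calc 2 * |∑ x, (if c x = 1 then p x - q x else 0)|
        = |∑ x, (if c x = 1 then p x - q x else 0)|
          + |∑ x, (if c x = 1 then (0:ℝ) else p x - q x)| := by
          rw [huv, abs_neg]; ring
      _ ≤ (∑ x, |if c x = 1 then p x - q x else 0|)
          + (∑ x, |if c x = 1 then (0:ℝ) else p x - q x|) :=
          add_le_add (Finset.abs_sum_le_sum_abs _ _) (Finset.abs_sum_le_sum_abs _ _)
      _ = ∑ x, (|if c x = 1 then p x - q x else 0| + |if c x = 1 then (0:ℝ) else p x - q x|) :=
          (Finset.sum_add_distrib).symm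
      _ = ∑ x, |p x - q x| :=
          Finset.sum_congr rfl (fun x _ => by split_ifs <;> simp)
  rw [hS0, hS1]
  have hrw : pr P (fun ω => c (X ω) = 1 ∧ S ω = 0) / (1/2)
      - pr P (fun ω => c (X ω) = 1 ∧ S ω = 1) / (1/2)
      = 2 * (pr P (fun ω => c (X ω) = 1 ∧ S ω = 0)
          - pr P (fun ω => c (X ω) = 1 ∧ S ω = 1)) := by ring
  rw [hrw, abs_mul, abs_of_nonneg (by norm_num : (0:ℝ) ≤ 2), hdiff]
  exact le_trans habs hDle
end
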